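/- Let σ be a positive definite d×d density matrix and X a positive semidefinite d×d matrix, and let p ∈ (1,2]. Then tr(σ^{1/p} (σ^{1/(2p)} X σ^{1/(2p)})^{p−1}) ≤ (tr(σ^{1/2} X σ^{1/2}))^{p−1}. -/

import Mathlib

open scoped ComplexOrder
open Matrix in
/-- quadratic form of a unitarily-diagonalized matrix as a weighted sum -/
lemma quad_diag {d : ℕ} (V : Matrix (Fin d) (Fin d) ℂ)
    (hV : V ∈ Matrix.unitaryGroup (Fin d) ℂ) (ν : Fin d → ℝ) (u : Fin d → ℂ) :
    star u ⬝ᵥ (V * Matrix.diagonal (RCLike.ofReal ∘ ν) * star V) *ᵥ u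
      = ∑ j, ((ν j : ℂ) * Complex.normSq ((star V *ᵥ u) j)) := by
  set c := star V *ᵥ u with hc
  have h1 : (V * Matrix.diagonal (RCLike.ofReal ∘ ν) * star V) *ᵥ u
      = V *ᵥ (Matrix.diagonal (RCLike.ofReal ∘ ν) *ᵥ c) := by
    rw [hc, mulVec_mulVec, mulVec_mulVec]
  have h2 : star u ⬝ᵥ (V *ᵥ (Matrix.diagonal (RCLike.ofReal ∘ ν) *ᵥ c))
      = star c ⬝ᵥ (Matrix.diagonal (RCLike.ofReal ∘ ν) *ᵥ c) := by
    rw [dotProduct_mulVec]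
    congr 1
    rw [hc, star_mulVec, star_eq_conjTranspose V, conjTranspose_conjTranspose]
  rw [h1, h2, dotProduct]
  refine Finset.sum_congr rfl fun j _ => ?_
  rw [mulVec_diagonal]
  simp only [Pi.star_apply, Function.comp_apply, RCLike.star_def]
  rw [mul_comm ((starRingEnd ℂ) (c j)), mul_assoc, Complex.mul_conj]
  push_cast
  rfl

/-- Real power of a matrix via the continuous functional calculus. -/
noncomputable def mrpow {d : ℕ} (A : Matrix (Fin d) (Fin d) ℂ) (r : ℝ) :
    Matrix (Fin d) (Fin d) ℂ :=
  cfc (fun x : ℝ => x ^ r) A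

open Matrix in
lemma norm_conj_unitary {d : ℕ} (V : Matrix (Fin d) (Fin d) ℂ)
    (hV : V ∈ Matrix.unitaryGroup (Fin d) ℂ) (u : Fin d → ℂ)
    (hu : star u ⬝ᵥ u = 1) :
    ∑ j, Complex.normSq ((star V *ᵥ u) j) = 1 := by
  set c := star V *ᵥ u with hc
  have h1 : star c ⬝ᵥ c = star u ⬝ᵥ u := by
    have hsc : star c = star u ᵥ* V := by
      rw [hc, star_mulVec, star_eq_conjTranspose V, conjTranspose_conjTranspose]
    rw [hsc, hc, ← dotProduct_mulVec, mulVec_mulVec,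
      (Matrix.mem_unitaryGroup_iff).mp hV, one_mulVec]
  have h2 : star c ⬝ᵥ c = ((∑ j, Complex.normSq (c j) : ℝ) : ℂ) := by
    rw [dotProduct]
    push_cast
    refine Finset.sum_congr rfl fun j _ => ?_
    simp only [Pi.star_apply, RCLike.star_def]
    rw [mul_comm, Complex.mul_conj]
  have := h2.symm.trans (h1.trans hu)
  exact_mod_cast this

open Matrix in
lemma quad_mrpow_le {d : ℕ} {M : Matrix (Fin d) (Fin d) ℂ} (hM : M.PosSemidef)
    {r : ℝ} (hr0 : 0 < r) (hr1 : r ≤ 1) (u : Fin d → ℂ)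
    (hu : star u ⬝ᵥ u = 1) :
    (star u ⬝ᵥ (mrpow M r) *ᵥ u).re ≤ ((star u ⬝ᵥ M *ᵥ u).re) ^ r := by
  have hH : M.IsHermitian := hM.1
  set V : Matrix (Fin d) (Fin d) ℂ := (hH.eigenvectorUnitary : Matrix (Fin d) (Fin d) ℂ) with hVdef
  set μ := hH.eigenvalues with hμdef
  have hcfc : mrpow M r = V * Matrix.diagonal (RCLike.ofReal ∘ (fun x : ℝ => x ^ r) ∘ μ) * star V := by
    rw [mrpow, hH.cfc_eq]; rfl
  have hspec : M = V * Matrix.diagonal (RCLike.ofReal ∘ μ) * star V := hH.spectral_theorem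
  set c := star V *ᵥ u with hc
  set w : Fin d → ℝ := fun j => Complex.normSq (c j) with hw
  have hV : V ∈ Matrix.unitaryGroup (Fin d) ℂ := hH.eigenvectorUnitary.2
  have hwsum : ∑ j, w j = 1 := norm_conj_unitary V hV u hu
  have h1 : (star u ⬝ᵥ (mrpow M r) *ᵥ u) = ∑ j, (((μ j ^ r) * w j : ℝ) : ℂ) := by
    rw [hcfc, quad_diag V hV ((fun x : ℝ => x ^ r) ∘ μ) u]
    push_cast; rfl
  have h2 : (star u ⬝ᵥ M *ᵥ u) = ∑ j, ((μ j * w j : ℝ) : ℂ) := by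
    conv_lhs => rw [hspec]
    rw [quad_diag V hV μ u]
    push_cast; rfl
  rw [h1, h2]
  have hre1 : (∑ j, (((μ j ^ r) * w j : ℝ) : ℂ)).re = ∑ j, (μ j ^ r) * w j := by
    rw [← Complex.ofReal_sum]; exact Complex.ofReal_re _
  have hre2 : (∑ j, ((μ j * w j : ℝ) : ℂ)).re = ∑ j, μ j * w j := by
    rw [← Complex.ofReal_sum]; exact Complex.ofReal_re _
  rw [hre1, hre2]
  have hμ0 : ∀ j, 0 ≤ μ j := hM.eigenvalues_nonneg
  have hp : (1 : ℝ) ≤ 1 / r := by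
    rw [le_div_iff₀ hr0]; simpa using hr1
  have key := Real.arith_mean_le_rpow_mean Finset.univ w (fun j => μ j ^ r)
    (fun i _ => Complex.normSq_nonneg _) hwsum
    (fun i _ => Real.rpow_nonneg (hμ0 i) r) hp
  have hz : ∀ j, (μ j ^ r) ^ (1/r) = μ j := fun j => by
    rw [← Real.rpow_mul (hμ0 j), mul_one_div_cancel hr0.ne', Real.rpow_one]
  simp only [hz, one_div_one_div] at key
  calc ∑ j, (μ j ^ r) * w j = ∑ j, w j * μ j ^ r := by simp [mul_comm]
    _ ≤ (∑ j, w j * μ j) ^ r := key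
    _ = (∑ j, μ j * w j) ^ r := by simp [mul_comm]

theorem stmt12 {d : ℕ} (σ X : Matrix (Fin d) (Fin d) ℂ)
    (hσ : σ.PosDef) (hσtr : Matrix.trace σ = 1) (hX : X.PosSemidef)
    (p : ℝ) (hp1 : 1 < p) (hp2 : p ≤ 2) :
    (Matrix.trace (mrpow σ (1 / p) *
        mrpow (mrpow σ (1 / (2 * p)) * X * mrpow σ (1 / (2 * p))) (p - 1))).re ≤
      ((Matrix.trace (mrpow σ (1 / 2) * X * mrpow σ (1 / 2))).re) ^ (p - 1) := by
  open Matrix Complex in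
  have hp0 : (0 : ℝ) < p := lt_trans one_pos hp1
  set r : ℝ := p - 1 with hrdef
  have hr0 : 0 < r := by simp [hrdef]; linarith
  have hr1 : r ≤ 1 := by simp [hrdef]; linarith
  have hH : σ.IsHermitian := hσ.1
  set U : Matrix (Fin d) (Fin d) ℂ := (hH.eigenvectorUnitary : Matrix (Fin d) (Fin d) ℂ) with hUdef
  set lam := hH.eigenvalues with hlamdef
  have hlam : ∀ i, 0 < lam i := hσ.eigenvalues_pos
  have hUU : star U * U = 1 := Unitary.coe_star_mul_self hH.eigenvectorUnitary
  have hUU' : U * star U = 1 := Unitary.coe_mul_star_self hH.eigenvectorUnitary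
  have hUmem : U ∈ Matrix.unitaryGroup (Fin d) ℂ := hH.eigenvectorUnitary.2
  set e : Fin d → (Fin d → ℂ) := fun i => Pi.single i 1 with hedef
  set u : Fin d → (Fin d → ℂ) := fun i => U *ᵥ e i with hudef
  -- (b) diagonalization of mrpow σ s
  have hS : ∀ s : ℝ, mrpow σ s
      = U * Matrix.diagonal (RCLike.ofReal ∘ (fun x : ℝ => x ^ s) ∘ lam) * star U := by
    intro s; rw [mrpow, hH.cfc_eq]; rfl
  -- (a) columns are unit vectors
  have hstare : ∀ i, star (e i) = e i := by
    intro i; ext j; simp [hedef, Pi.single_apply, apply_ite]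
  have hu1 : ∀ i, star (u i) ⬝ᵥ u i = 1 := by
    intro i
    rw [hudef]
    simp only
    rw [star_mulVec, ← dotProduct_mulVec, mulVec_mulVec, ← star_eq_conjTranspose, hUU,
      one_mulVec, hstare]
    simp [hedef, dotProduct, Pi.single_apply]
  -- diagonal entries as quadratic forms
  have hdiag : ∀ (B : Matrix (Fin d) (Fin d) ℂ) i,
      (star U * B * U) i i = star (u i) ⬝ᵥ B *ᵥ u i := by
    intro B i
    rw [hudef]
    simp only
    rw [star_mulVec, ← dotProduct_mulVec, mulVec_mulVec, mulVec_mulVec,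
      ← star_eq_conjTranspose, hstare]
    simp [hedef, dotProduct, Pi.single_apply, Matrix.mulVec]
  -- (d) trace formula
  have htr : ∀ (ν : Fin d → ℝ) (C : Matrix (Fin d) (Fin d) ℂ),
      Matrix.trace (U * Matrix.diagonal (RCLike.ofReal ∘ ν) * star U * C)
        = ∑ i, ((ν i : ℂ) * (star (u i) ⬝ᵥ C *ᵥ u i)) := by
    intro ν C
    have : U * Matrix.diagonal (RCLike.ofReal ∘ ν) * star U * C
        = U * (Matrix.diagonal (RCLike.ofReal ∘ ν) * (star U * C)) := by
      simp only [mul_assoc]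
    rw [this, Matrix.trace_mul_comm U, Matrix.trace]
    refine Finset.sum_congr rfl fun i _ => ?_
    rw [Matrix.diag]
    rw [show Matrix.diagonal (RCLike.ofReal ∘ ν) * (star U * C) * U
        = Matrix.diagonal (RCLike.ofReal ∘ ν) * (star U * C * U) by simp only [mul_assoc]]
    rw [Matrix.diagonal_mul, hdiag]
    rfl
  -- (c) eigenvector action
  have hact : ∀ (s : ℝ) i, (mrpow σ s) *ᵥ u i = ((lam i ^ s : ℝ) : ℂ) • u i := by
    intro s i
    rw [hS s, hudef]
    simp only
    rw [← mulVec_mulVec, ← mulVec_mulVec, mulVec_mulVec (e i) (star U) U, hUU, one_mulVec]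
    have h1 : Matrix.diagonal (RCLike.ofReal ∘ (fun x : ℝ => x ^ s) ∘ lam) *ᵥ e i
        = ((lam i ^ s : ℝ) : ℂ) • e i := by
      ext j
      simp [hedef, Matrix.mulVec_diagonal, Pi.single_apply, mul_comm]
      split <;> simp_all
    rw [h1, mulVec_smul]
  -- the conjugating matrix S and the inner matrix A
  set S := mrpow σ (1 / (2 * p)) with hSdef
  have hSsa : IsSelfAdjoint S := by rw [hSdef, mrpow]; exact cfc_predicate _ _
  have hSH : S.IsHermitian := hSsa
  set A := S * X * S with hAdef
  have hA : A.PosSemidef := by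
    have h := hX.conjTranspose_mul_mul_same S
    rwa [hSH.eq] at h
  set x : Fin d → ℝ := fun i => (star (u i) ⬝ᵥ X *ᵥ u i).re with hxdef
  have hx0 : ∀ i, 0 ≤ x i := fun i => hX.re_dotProduct_nonneg (u i)
  -- quadratic form of A on eigenvectors of σ
  have hform : ∀ i, (star (u i) ⬝ᵥ A *ᵥ u i).re = lam i ^ (1/p) * x i := by
    intro i
    have hAv : A *ᵥ u i = ((lam i ^ (1/(2*p)) : ℝ) : ℂ) • (S *ᵥ (X *ᵥ u i)) := by
      rw [hAdef, ← mulVec_mulVec, ← mulVec_mulVec, hact (1/(2*p)) i, mulVec_smul, mulVec_smul]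
    have hvS : star (u i) ᵥ* S = ((lam i ^ (1/(2*p)) : ℝ) : ℂ) • star (u i) := by
      have h1 : star (S *ᵥ u i) = star (u i) ᵥ* S := by
        rw [star_mulVec, hSH.eq]
      rw [← h1, hact (1/(2*p)) i, star_smul]
      simp
    rw [hAv, dotProduct_smul, dotProduct_mulVec, hvS, smul_dotProduct]
    rw [smul_eq_mul, smul_eq_mul, ← mul_assoc, ← Complex.ofReal_mul,
      ← Real.rpow_add (hlam i)]
    have hexp : 1/(2*p) + 1/(2*p) = 1/p := by field_simp; norm_num
    rw [hexp, Complex.re_ofReal_mul]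
  -- LHS as a weighted sum
  have hLHS : (Matrix.trace (mrpow σ (1/p) * mrpow A r)).re
      = ∑ i, lam i ^ (1/p) * (star (u i) ⬝ᵥ (mrpow A r) *ᵥ u i).re := by
    rw [hS (1/p), htr ((fun t : ℝ => t ^ (1/p)) ∘ lam) (mrpow A r), Complex.re_sum]
    refine Finset.sum_congr rfl fun i _ => ?_
    exact Complex.re_ofReal_mul _ _
  -- multiplication rule for the diagonalized powers
  have assoc : ∀ (D E : Matrix (Fin d) (Fin d) ℂ),
      (U * D * star U) * (U * E * star U) = U * (D * E) * star U := by
    intro D E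
    calc (U * D * star U) * (U * E * star U)
        = U * D * (star U * U) * (E * star U) := by simp only [mul_assoc]
      _ = U * (D * E) * star U := by rw [hUU]; simp only [mul_assoc, mul_one, one_mul]
  have hhalf : mrpow σ (1/2) * mrpow σ (1/2) = σ := by
    rw [hS (1/2), assoc, Matrix.diagonal_mul_diagonal]
    conv_rhs => rw [hH.spectral_theorem]
    congr 2
    funext i j
    rcases eq_or_ne i j with rfl | hij
    · simp only [Matrix.diagonal_apply_eq, Function.comp_apply]
      have hl : lam i ^ ((1:ℝ)/2) * lam i ^ ((1:ℝ)/2) = lam i := by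
        rw [← Real.rpow_add (hlam i)]; norm_num
      rw [← RCLike.ofReal_mul, hl]
    · simp [Matrix.diagonal_apply_ne _ hij]
  -- RHS as a weighted sum
  have hsum1 : ∑ i, lam i = 1 := by
    have h1 : Matrix.trace σ = ∑ i, ((lam i : ℝ) : ℂ) := by
      conv_lhs => rw [show σ = U * Matrix.diagonal (RCLike.ofReal ∘ lam) * star U from hH.spectral_theorem]
      rw [Matrix.trace_mul_cycle, hUU, one_mul, Matrix.trace_diagonal]
      rfl
    rw [hσtr] at h1
    exact_mod_cast h1.symm
  have hRHS : (Matrix.trace (mrpow σ (1/2) * X * mrpow σ (1/2))).re = ∑ i, lam i * x i := by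
    rw [Matrix.trace_mul_cycle, hhalf]
    conv_lhs => rw [show σ = U * Matrix.diagonal (RCLike.ofReal ∘ lam) * star U from hH.spectral_theorem]
    rw [htr lam X, Complex.re_sum]
    refine Finset.sum_congr rfl fun i _ => ?_
    exact Complex.re_ofReal_mul _ _
  rw [hLHS, hRHS]
  -- termwise Jensen bound
  have step1 : ∑ i, lam i ^ (1/p) * (star (u i) ⬝ᵥ (mrpow A r) *ᵥ u i).re
      ≤ ∑ i, lam i * x i ^ r := by
    refine Finset.sum_le_sum fun i _ => ?_
    have hq := quad_mrpow_le hA hr0 hr1 (u i) (hu1 i)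
    rw [hform i] at hq
    have h2 : lam i ^ (1/p) * (star (u i) ⬝ᵥ (mrpow A r) *ᵥ u i).re
        ≤ lam i ^ (1/p) * (lam i ^ (1/p) * x i) ^ r :=
      mul_le_mul_of_nonneg_left hq (Real.rpow_nonneg (hlam i).le _)
    refine h2.trans_eq ?_
    rw [Real.mul_rpow (Real.rpow_nonneg (hlam i).le _) (hx0 i),
      ← Real.rpow_mul (hlam i).le, ← mul_assoc, ← Real.rpow_add (hlam i)]
    have hexp : 1/p + 1/p * r = 1 := by rw [hrdef]; field_simp; ring
    rw [hexp, Real.rpow_one]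
  refine step1.trans ?_
  -- final scalar Jensen
  have hp' : (1:ℝ) ≤ 1 / r := by rw [le_div_iff₀ hr0]; simpa using hr1
  have key := Real.arith_mean_le_rpow_mean Finset.univ lam (fun i => x i ^ r)
    (fun i _ => (hlam i).le) hsum1 (fun i _ => Real.rpow_nonneg (hx0 i) r) hp'
  have hz : ∀ i, (x i ^ r) ^ (1/r) = x i := fun i => by
    rw [← Real.rpow_mul (hx0 i), mul_one_div_cancel hr0.ne', Real.rpow_one]
  simp only [hz, one_div_one_div] at key
  exact key
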